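/- Every right eigenvalue ξ of the monic quaternionic matrix polynomial L satisfies |ξ| ≤ ( 1 + (1/2)[ β₁² + β₂² + √((β₁² + β₂²)² + 4(2β₁β₂ + 1)) ] )^{1/4}, where β₁² = (1/2)[ Σ_{i=0}^{k−3}(‖Aᵢ‖₂² + ‖Bᵢ‖₂²) + √((Σ_{i=0}^{k−3}(‖Aᵢ‖₂² − ‖Bᵢ‖₂²))² + 4‖Σ_{i=0}^{k−3} AᵢBᵢᴴ‖₂²) ] and β₂² = (1/2)[ Σ_{i=k−2}^{k−1}(‖Aᵢ‖₂² + ‖Bᵢ‖₂²) + √((Σ_{i=k−2}^{k−1}(‖Aᵢ‖₂² − ‖Bᵢ‖₂²))² + 4‖Σ_{i=k−2}^{k−1} AᵢBᵢᴴ‖₂²) ], with Bᵢ = A_{k−1}Aᵢ − A_{i−1}, A_{−1} = 0. -/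

import Mathlib

open scoped Matrix Quaternion BigOperators

noncomputable section

/-- Euclidean norm of a vector with entries in a normed ring (e.g. the quaternions). -/
def qVecNorm {R : Type*} [NormedRing R] {n : Type*} [Fintype n] (x : n → R) : ℝ :=
  Real.sqrt (∑ i, ‖x i‖ ^ 2)

/-- Operator 2-norm (spectral norm) of a matrix over a normed ring. -/
def qSpecNorm {R : Type*} [NormedRing R] {m n : Type*} [Fintype m] [Fintype n]
    (A : Matrix m n R) : ℝ :=
  sSup {c : ℝ | ∃ x : n → R, x ≠ 0 ∧ c = qVecNorm (A.mulVec x) / qVecNorm x}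

/-- `μ` is a right eigenvalue of the quaternionic matrix `A`. -/
def RightEig {n : Type*} [Fintype n] (A : Matrix n n ℍ[ℝ]) (μ : ℍ[ℝ]) : Prop :=
  ∃ x : n → ℍ[ℝ], x ≠ 0 ∧ A.mulVec x = fun i => x i * μ

/-- Right spectral radius of a quaternionic matrix. -/
def rSpecRad {n : Type*} [Fintype n] (A : Matrix n n ℍ[ℝ]) : ℝ :=
  sSup {r : ℝ | ∃ μ : ℍ[ℝ], RightEig A μ ∧ r = ‖μ‖}

/-- Spectral radius of a real 2×2 matrix. -/
def realSpecRad (B : Matrix (Fin 2) (Fin 2) ℝ) : ℝ :=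
  sSup {r : ℝ | ∃ μ ∈ spectrum ℝ B, r = |μ|}

/-- Block companion matrix of the monic quaternionic matrix polynomial with
coefficients `A 0, …, A (k-1)`. -/
def companion (k n : ℕ) (A : ℕ → Matrix (Fin n) (Fin n) ℍ[ℝ]) :
    Matrix (Fin k × Fin n) (Fin k × Fin n) ℍ[ℝ] :=
  fun p q =>
    if (p.1 : ℕ) + 1 = (q.1 : ℕ) then (if p.2 = q.2 then 1 else 0)
    else if (p.1 : ℕ) = k - 1 then -(A (q.1 : ℕ)) p.2 q.2 else 0

/-- The coefficients `Bᵢ = A_{k-1} Aᵢ - A_{i-1}` (with `A_{-1} = 0`). -/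
def Bseq (k n : ℕ) (A : ℕ → Matrix (Fin n) (Fin n) ℍ[ℝ]) (i : ℕ) :
    Matrix (Fin n) (Fin n) ℍ[ℝ] :=
  A (k - 1) * A i - (if i = 0 then 0 else A (i - 1))

/-- The coefficients `Cᵢ = -A_{k-1} Bᵢ + A_{k-2} Aᵢ - A_{i-2}` (with `A_{-1} = A_{-2} = 0`). -/
def Cseq (k n : ℕ) (A : ℕ → Matrix (Fin n) (Fin n) ℍ[ℝ]) (i : ℕ) :
    Matrix (Fin n) (Fin n) ℍ[ℝ] :=
  -(A (k - 1) * Bseq k n A i) + A (k - 2) * A i - (if i ≤ 1 then 0 else A (i - 2))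

/-- `lam` is a right eigenvalue of the monic matrix polynomial
`L(ξ) = Iξᵏ + A_{k-1}ξ^{k-1} + ⋯ + A₀`. -/
def PolyRightEig (k n : ℕ) (A : ℕ → Matrix (Fin n) (Fin n) ℍ[ℝ]) (lam : ℍ[ℝ]) : Prop :=
  ∃ x : Fin n → ℍ[ℝ], x ≠ 0 ∧
    ∀ j, (∑ i ∈ Finset.range k, ((A i).mulVec x j) * lam ^ i) + x j * lam ^ k = 0


set_option maxHeartbeats 1000000

section Aux
open scoped RealInnerProductSpace
variable {n : ℕ}

abbrev QV (n : ℕ) := PiLp 2 (fun _ : Fin n => ℍ[ℝ])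

def tq (x : Fin n → ℍ[ℝ]) : QV n := WithLp.toLp 2 x

lemma tq_norm (x : Fin n → ℍ[ℝ]) : ‖tq x‖ = qVecNorm x := by
  rw [PiLp.norm_eq_of_L2]; rfl

lemma tq_sum (s : Finset ℕ) (f : ℕ → Fin n → ℍ[ℝ]) :
    (∑ i ∈ s, tq (f i)) = tq (fun j => ∑ i ∈ s, f i j) := by
  simp only [tq, ← WithLp.toLp_sum]; congr 1; funext j
  exact Finset.sum_apply j s f

lemma tq_inner (x y : Fin n → ℍ[ℝ]) : ⟪tq x, tq y⟫ = ∑ j, (x j * star (y j)).re := by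
  rw [PiLp.inner_apply]; rfl

lemma re_mul_comm (a b : ℍ[ℝ]) : (a * b).re = (b * a).re := by
  rw [Quaternion.re_mul, Quaternion.re_mul]; ring

lemma tq_neg (x : Fin n → ℍ[ℝ]) : tq (fun j => -(x j)) = -(tq x) := rfl

def reAM : ℍ[ℝ] →+ ℝ where
  toFun := QuaternionAlgebra.re
  map_zero' := rfl
  map_add' _ _ := rfl

lemma re_sum (s : Finset ℕ) (f : ℕ → ℍ[ℝ]) : (∑ i ∈ s, f i).re = ∑ i ∈ s, (f i).re :=
  map_sum reAM f s

lemma re_sum' {ι : Type*} [Fintype ι] (f : ι → ℍ[ℝ]) : (∑ i, f i).re = ∑ i, (f i).re :=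
  map_sum reAM f Finset.univ

lemma qip_mulVec (A : Matrix (Fin n) (Fin n) ℍ[ℝ]) (x y : Fin n → ℍ[ℝ]) :
    ⟪tq (A.mulVec x), tq y⟫ = ⟪tq x, tq (Aᴴ.mulVec y)⟫ := by
  rw [tq_inner, tq_inner]
  simp only [Matrix.mulVec, dotProduct, Matrix.conjTranspose_apply]
  simp only [Finset.sum_mul, star_sum, Finset.mul_sum, star_mul, star_star, re_sum']
  rw [Finset.sum_comm]
  congr 1; funext j; congr 1; funext l
  rw [mul_assoc, re_mul_comm, mul_assoc]

lemma qVecNorm_nonneg (x : Fin n → ℍ[ℝ]) : 0 ≤ qVecNorm x := Real.sqrt_nonneg _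

lemma qVecNorm_sq (x : Fin n → ℍ[ℝ]) : qVecNorm x ^ 2 = ∑ j, ‖x j‖ ^ 2 :=
  Real.sq_sqrt (Finset.sum_nonneg fun _ _ => sq_nonneg _)

lemma qVecNorm_pos {x : Fin n → ℍ[ℝ]} (hx : x ≠ 0) : 0 < qVecNorm x := by
  obtain ⟨j, hj⟩ := Function.ne_iff.mp hx
  apply Real.sqrt_pos.mpr
  apply Finset.sum_pos' (fun _ _ => sq_nonneg _) ⟨j, Finset.mem_univ j, ?_⟩
  exact pow_pos (norm_pos_iff.mpr hj) 2

lemma frob_bound (A : Matrix (Fin n) (Fin n) ℍ[ℝ]) (x : Fin n → ℍ[ℝ]) :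
    qVecNorm (A.mulVec x) ≤ Real.sqrt (∑ j, ∑ i, ‖A j i‖ ^ 2) * qVecNorm x := by
  have h1 : qVecNorm (A.mulVec x) ^ 2 ≤ (∑ j, ∑ i, ‖A j i‖ ^ 2) * qVecNorm x ^ 2 := by
    rw [qVecNorm_sq, qVecNorm_sq, Finset.sum_mul]
    apply Finset.sum_le_sum; intro j _
    have h2 : ‖(A.mulVec x) j‖ ≤ ∑ i, ‖A j i‖ * ‖x i‖ := by
      show ‖∑ i, A j i * x i‖ ≤ _
      refine (norm_sum_le _ _).trans ?_
      exact le_of_eq (Finset.sum_congr rfl fun i _ => norm_mul _ _)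
    calc ‖(A.mulVec x) j‖ ^ 2 ≤ (∑ i, ‖A j i‖ * ‖x i‖) ^ 2 := by
          apply pow_le_pow_left₀ (norm_nonneg _) h2 2
      _ ≤ (∑ i, ‖A j i‖ ^ 2) * ∑ i, ‖x i‖ ^ 2 :=
          Finset.sum_mul_sq_le_sq_mul_sq _ _ _
  have h3 := Real.sqrt_le_sqrt h1
  rwa [Real.sqrt_sq (qVecNorm_nonneg _), Real.sqrt_mul
      (Finset.sum_nonneg fun _ _ => Finset.sum_nonneg fun _ _ => sq_nonneg _),
      Real.sqrt_sq (qVecNorm_nonneg _)] at h3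

lemma qSpecNorm_nonneg (A : Matrix (Fin n) (Fin n) ℍ[ℝ]) : 0 ≤ qSpecNorm A := by
  apply Real.sSup_nonneg
  rintro c ⟨x, -, rfl⟩
  exact div_nonneg (qVecNorm_nonneg _) (qVecNorm_nonneg _)

lemma mulVec_le (A : Matrix (Fin n) (Fin n) ℍ[ℝ]) (x : Fin n → ℍ[ℝ]) :
    qVecNorm (A.mulVec x) ≤ qSpecNorm A * qVecNorm x := by
  rcases eq_or_ne x 0 with rfl | hx
  · rw [Matrix.mulVec_zero]
    simp only [qVecNorm, norm_zero, Pi.zero_apply]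
    simp
  · have hpos := qVecNorm_pos hx
    have hle : qVecNorm (A.mulVec x) / qVecNorm x ≤ qSpecNorm A := by
      apply le_csSup
      · refine ⟨Real.sqrt (∑ j, ∑ i, ‖A j i‖ ^ 2), ?_⟩
        rintro c ⟨z, hz, rfl⟩
        rw [div_le_iff₀ (qVecNorm_pos hz)]
        exact frob_bound A z
      · exact ⟨x, hx, rfl⟩
    calc qVecNorm (A.mulVec x) = qVecNorm (A.mulVec x) / qVecNorm x * qVecNorm x := by
          field_simp
      _ ≤ qSpecNorm A * qVecNorm x := by
          exact mul_le_mul_of_nonneg_right hle (le_of_lt hpos)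

lemma qVecNorm_zero : qVecNorm (0 : Fin n → ℍ[ℝ]) = 0 := by simp [qVecNorm]

lemma conjT_mulVec_le (A : Matrix (Fin n) (Fin n) ℍ[ℝ]) (u : Fin n → ℍ[ℝ]) :
    qVecNorm (Aᴴ.mulVec u) ≤ qSpecNorm A * qVecNorm u := by
  set w := Aᴴ.mulVec u with hw
  have key : qVecNorm w ^ 2 ≤ qSpecNorm A * qVecNorm u * qVecNorm w := by
    have h1 : (qVecNorm w : ℝ) ^ 2 = ⟪tq w, tq w⟫ := by
      rw [real_inner_self_eq_norm_sq, tq_norm]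
    rw [h1, hw, qip_mulVec Aᴴ u w, Matrix.conjTranspose_conjTranspose]
    calc ⟪tq u, tq (A.mulVec w)⟫ ≤ ‖tq u‖ * ‖tq (A.mulVec w)‖ := real_inner_le_norm _ _
      _ ≤ qVecNorm u * (qSpecNorm A * qVecNorm w) := by
          rw [tq_norm, tq_norm]
          exact mul_le_mul_of_nonneg_left (mulVec_le A w) (qVecNorm_nonneg u)
      _ = qSpecNorm A * qVecNorm u * qVecNorm w := by ring
  rcases ((qVecNorm_nonneg w).eq_or_lt.imp Eq.symm id) with h0 | h0
  · rw [h0]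
    exact mul_nonneg (qSpecNorm_nonneg A) (qVecNorm_nonneg u)
  · have := key
    rw [pow_two] at this
    exact le_of_mul_le_mul_right this h0

lemma tq_add_fn (a b : Fin n → ℍ[ℝ]) : tq (fun j => a j + b j) = tq a + tq b := rfl

lemma two_by_two (p q c a b μ : ℝ) (hp : 0 ≤ p) (hq : 0 ≤ q) (hc : 0 ≤ c)
    (ha : 0 ≤ a) (hb : 0 ≤ b)
    (hμ : μ = (1/2) * ((p + q) + Real.sqrt ((p - q)^2 + 4 * c^2))) :
    p * a^2 + 2 * c * (a * b) + q * b^2 ≤ μ * (a^2 + b^2) := by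
  set D := Real.sqrt ((p - q)^2 + 4 * c^2) with hD
  have hD0 : 0 ≤ D := Real.sqrt_nonneg _
  have hD2 : D^2 = (p - q)^2 + 4 * c^2 := Real.sq_sqrt (by positivity)
  have hμp : 0 ≤ μ - p := by nlinarith [sq_nonneg (D - (p - q)), sq_nonneg c]
  have hμq : 0 ≤ μ - q := by nlinarith [sq_nonneg (D - (q - p)), sq_nonneg c]
  have hprod : (μ - p) * (μ - q) = c^2 := by nlinarith []
  set α := Real.sqrt (μ - p)
  set β := Real.sqrt (μ - q)
  have e1 : α^2 = μ - p := Real.sq_sqrt hμp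
  have e2 : β^2 = μ - q := Real.sq_sqrt hμq
  have e3 : α * β = c := by
    have : (α * β)^2 = c^2 := by rw [mul_pow, e1, e2, hprod]
    have hαβ : 0 ≤ α * β := mul_nonneg (Real.sqrt_nonneg _) (Real.sqrt_nonneg _)
    nlinarith []
  nlinarith [sq_nonneg (α * a - β * b), mul_nonneg ha hb]

lemma sum_mulVec' (s : Finset ℕ) (A : ℕ → Matrix (Fin n) (Fin n) ℍ[ℝ])
    (x : Fin n → ℍ[ℝ]) (j : Fin n) :
    (∑ i ∈ s, A i).mulVec x j = ∑ i ∈ s, (A i).mulVec x j := by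
  simp only [Matrix.mulVec, dotProduct, Finset.sum_apply, Finset.sum_mul,
    Matrix.sum_apply]
  rw [Finset.sum_comm]

lemma core (s : Finset ℕ) (M N : ℕ → Matrix (Fin n) (Fin n) ℍ[ℝ]) (y : ℕ → Fin n → ℍ[ℝ])
    (uf vf : Fin n → ℍ[ℝ])
    (hu : ∀ j, uf j = ∑ i ∈ s, (M i).mulVec (y i) j)
    (hv : ∀ j, vf j = ∑ i ∈ s, (N i).mulVec (y i) j) :
    qVecNorm uf ^ 2 + qVecNorm vf ^ 2 ≤
      (1/2) * ((∑ i ∈ s, (qSpecNorm (M i) ^ 2 + qSpecNorm (N i) ^ 2)) +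
        Real.sqrt ((∑ i ∈ s, (qSpecNorm (M i) ^ 2 - qSpecNorm (N i) ^ 2)) ^ 2 +
          4 * qSpecNorm (∑ i ∈ s, M i * (N i)ᴴ) ^ 2)) * (∑ i ∈ s, qVecNorm (y i) ^ 2) := by
  set p := ∑ i ∈ s, qSpecNorm (M i) ^ 2 with hp
  set q := ∑ i ∈ s, qSpecNorm (N i) ^ 2 with hq
  set c := qSpecNorm (∑ i ∈ s, M i * (N i)ᴴ) with hc
  have hps : (∑ i ∈ s, (qSpecNorm (M i) ^ 2 + qSpecNorm (N i) ^ 2)) = p + q :=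
    Finset.sum_add_distrib
  have hqs : (∑ i ∈ s, (qSpecNorm (M i) ^ 2 - qSpecNorm (N i) ^ 2)) = p - q :=
    Finset.sum_sub_distrib _ _
  rw [hps, hqs]
  set μ := (1/2) * ((p + q) + Real.sqrt ((p - q)^2 + 4 * c^2)) with hμ
  set S := ∑ i ∈ s, qVecNorm (y i) ^ 2 with hS
  set W := qVecNorm uf ^ 2 + qVecNorm vf ^ 2 with hW
  clear_value p q c μ S W
  have hp0 : 0 ≤ p := hp ▸ Finset.sum_nonneg fun _ _ => sq_nonneg _
  have hq0 : 0 ≤ q := hq ▸ Finset.sum_nonneg fun _ _ => sq_nonneg _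
  have hc0 : 0 ≤ c := hc ▸ qSpecNorm_nonneg _
  have hS0 : 0 ≤ S := hS ▸ Finset.sum_nonneg fun _ _ => sq_nonneg _
  have hμ0 : 0 ≤ μ := by
    have := Real.sqrt_nonneg ((p - q)^2 + 4 * c^2)
    rw [hμ]; nlinarith []
  have hW0 : 0 ≤ W := hW ▸ add_nonneg (sq_nonneg _) (sq_nonneg _)
  -- the auxiliary vectors g i
  set g : ℕ → Fin n → ℍ[ℝ] := fun i => fun j =>
    ((M i)ᴴ.mulVec uf) j + ((N i)ᴴ.mulVec vf) j with hg
  have htqu : tq uf = ∑ i ∈ s, tq ((M i).mulVec (y i)) := by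
    rw [tq_sum]; congr 1; funext j; exact hu j
  have htqv : tq vf = ∑ i ∈ s, tq ((N i).mulVec (y i)) := by
    rw [tq_sum]; congr 1; funext j; exact hv j
  -- Step 1 : W = ∑ ⟪y i, g i⟫
  have step1 : W = ∑ i ∈ s, ⟪tq (y i), tq (g i)⟫ := by
    have h1 : qVecNorm uf ^ 2 = ∑ i ∈ s, ⟪tq (y i), tq ((M i)ᴴ.mulVec uf)⟫ := by
      calc qVecNorm uf ^ 2 = ⟪tq uf, tq uf⟫ := by
            rw [real_inner_self_eq_norm_sq, tq_norm]
        _ = ⟪(∑ i ∈ s, tq ((M i).mulVec (y i))), tq uf⟫ := by rw [htqu]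
        _ = ∑ i ∈ s, ⟪tq ((M i).mulVec (y i)), tq uf⟫ := by rw [sum_inner]
        _ = _ := Finset.sum_congr rfl fun i _ => qip_mulVec (M i) (y i) uf
    have h2 : qVecNorm vf ^ 2 = ∑ i ∈ s, ⟪tq (y i), tq ((N i)ᴴ.mulVec vf)⟫ := by
      calc qVecNorm vf ^ 2 = ⟪tq vf, tq vf⟫ := by
            rw [real_inner_self_eq_norm_sq, tq_norm]
        _ = ⟪(∑ i ∈ s, tq ((N i).mulVec (y i))), tq vf⟫ := by rw [htqv]
        _ = ∑ i ∈ s, ⟪tq ((N i).mulVec (y i)), tq vf⟫ := by rw [sum_inner]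
        _ = _ := Finset.sum_congr rfl fun i _ => qip_mulVec (N i) (y i) vf
    rw [hW, h1, h2, ← Finset.sum_add_distrib]
    refine Finset.sum_congr rfl fun i _ => ?_
    rw [hg]
    rw [show tq (fun j => ((M i)ᴴ.mulVec uf) j + ((N i)ᴴ.mulVec vf) j)
        = tq ((M i)ᴴ.mulVec uf) + tq ((N i)ᴴ.mulVec vf) from rfl]
    rw [inner_add_right]
  -- Step 2 : cross term bound
  have cross : ∑ i ∈ s, ⟪tq ((M i)ᴴ.mulVec uf), tq ((N i)ᴴ.mulVec vf)⟫ ≤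
      c * (qVecNorm uf * qVecNorm vf) := by
    have h3 : ∀ i ∈ s, ⟪tq ((M i)ᴴ.mulVec uf), tq ((N i)ᴴ.mulVec vf)⟫
        = ⟪tq uf, tq ((M i * (N i)ᴴ).mulVec vf)⟫ := by
      intro i _
      have := qip_mulVec (M i)ᴴ uf ((N i)ᴴ.mulVec vf)
      rw [Matrix.conjTranspose_conjTranspose] at this
      rw [this, Matrix.mulVec_mulVec]
    rw [Finset.sum_congr rfl h3, ← inner_sum]
    have h4 : (∑ i ∈ s, tq ((M i * (N i)ᴴ).mulVec vf))
        = tq ((∑ i ∈ s, M i * (N i)ᴴ).mulVec vf) := by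
      rw [tq_sum]; congr 1; funext j
      show (∑ i ∈ s, ((M i * (N i)ᴴ).mulVec vf) j) = ((∑ i ∈ s, M i * (N i)ᴴ).mulVec vf) j
      rw [sum_mulVec']
    rw [h4]
    calc ⟪tq uf, tq ((∑ i ∈ s, M i * (N i)ᴴ).mulVec vf)⟫
        ≤ ‖tq uf‖ * ‖tq ((∑ i ∈ s, M i * (N i)ᴴ).mulVec vf)‖ := real_inner_le_norm _ _
      _ ≤ qVecNorm uf * (c * qVecNorm vf) := by
          rw [tq_norm, tq_norm, hc]
          exact mul_le_mul_of_nonneg_left (mulVec_le _ vf) (qVecNorm_nonneg uf)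
      _ = c * (qVecNorm uf * qVecNorm vf) := by ring
  -- Step 3 : T bound
  set T := ∑ i ∈ s, ‖tq (g i)‖^2 with hT
  have hTbound : T ≤ μ * W := by
    have expand : T = (∑ i ∈ s, ‖tq ((M i)ᴴ.mulVec uf)‖^2)
        + 2 * (∑ i ∈ s, ⟪tq ((M i)ᴴ.mulVec uf), tq ((N i)ᴴ.mulVec vf)⟫)
        + (∑ i ∈ s, ‖tq ((N i)ᴴ.mulVec vf)‖^2) := by
      rw [hT, Finset.mul_sum, ← Finset.sum_add_distrib, ← Finset.sum_add_distrib]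
      refine Finset.sum_congr rfl fun i _ => ?_
      rw [hg, show tq (fun j => ((M i)ᴴ.mulVec uf) j + ((N i)ᴴ.mulVec vf) j)
          = tq ((M i)ᴴ.mulVec uf) + tq ((N i)ᴴ.mulVec vf) from rfl]
      rw [@norm_add_sq_real]
    have b1 : (∑ i ∈ s, ‖tq ((M i)ᴴ.mulVec uf)‖^2) ≤ p * qVecNorm uf ^ 2 := by
      rw [hp, Finset.sum_mul]
      refine Finset.sum_le_sum fun i _ => ?_
      rw [tq_norm, ← mul_pow]
      exact pow_le_pow_left₀ (qVecNorm_nonneg _) (conjT_mulVec_le (M i) uf) 2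
    have b2 : (∑ i ∈ s, ‖tq ((N i)ᴴ.mulVec vf)‖^2) ≤ q * qVecNorm vf ^ 2 := by
      rw [hq, Finset.sum_mul]
      refine Finset.sum_le_sum fun i _ => ?_
      rw [tq_norm, ← mul_pow]
      exact pow_le_pow_left₀ (qVecNorm_nonneg _) (conjT_mulVec_le (N i) vf) 2
    have tbt := two_by_two p q c (qVecNorm uf) (qVecNorm vf) μ hp0 hq0 hc0
      (qVecNorm_nonneg _) (qVecNorm_nonneg _) hμ
    rw [expand]
    rw [hW]
    nlinarith [cross, b1, b2]
  -- Step 4 : W ≤ √S √T  and conclude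
  have step4 : W ≤ Real.sqrt S * Real.sqrt T := by
    rw [step1]
    have hterm : ∀ i ∈ s, ⟪tq (y i), tq (g i)⟫ ≤ ‖tq (y i)‖ * ‖tq (g i)‖ :=
      fun i _ => real_inner_le_norm _ _
    refine (Finset.sum_le_sum hterm).trans ?_
    have CS := Finset.sum_mul_sq_le_sq_mul_sq s (fun i => ‖tq (y i)‖)
      (fun i => ‖tq (g i)‖)
    have hSsum : ∑ i ∈ s, ‖tq (y i)‖ ^ 2 = S := by
      rw [hS]; exact Finset.sum_congr rfl fun i _ => by rw [tq_norm]
    rw [hSsum] at CS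
    have h0 : 0 ≤ ∑ i ∈ s, ‖tq (y i)‖ * ‖tq (g i)‖ :=
      Finset.sum_nonneg fun i _ => mul_nonneg (norm_nonneg _) (norm_nonneg _)
    have hT0 : 0 ≤ T := Finset.sum_nonneg fun i _ => sq_nonneg _
    have h6 : (∑ i ∈ s, ‖tq (y i)‖ * ‖tq (g i)‖) ≤ Real.sqrt (S * T) := by
      have := Real.sqrt_le_sqrt CS
      rwa [Real.sqrt_sq h0] at this
    refine h6.trans ?_
    rw [Real.sqrt_mul hS0]
  have hT0 : 0 ≤ T := Finset.sum_nonneg fun i _ => sq_nonneg _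
  have step4' : W ≤ Real.sqrt S * Real.sqrt (μ * W) :=
    step4.trans (mul_le_mul_of_nonneg_left (Real.sqrt_le_sqrt hTbound) (Real.sqrt_nonneg S))
  have h5 : W ^ 2 ≤ S * (μ * W) := by
    calc W ^ 2 ≤ (Real.sqrt S * Real.sqrt (μ * W)) ^ 2 := pow_le_pow_left₀ hW0 step4' 2
      _ = S * (μ * W) := by
          rw [mul_pow, Real.sq_sqrt hS0, Real.sq_sqrt (mul_nonneg hμ0 hW0)]
  show W ≤ μ * S
  rcases (hW0.eq_or_lt.imp Eq.symm id) with h0 | h0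
  · rw [h0]; exact mul_nonneg hμ0 hS0
  · nlinarith [h5, h0]





lemma root_bound (P Q w : ℝ) (hP : 0 ≤ P) (hQ : 0 ≤ Q) (hw : 0 ≤ w) (h : w^2 ≤ P*w + Q) :
    w ≤ (1/2)*(P + Real.sqrt (P^2 + 4*Q)) := by
  have hD0 : 0 ≤ Real.sqrt (P^2+4*Q) := Real.sqrt_nonneg _
  have hD2 : (Real.sqrt (P^2+4*Q))^2 = P^2+4*Q := Real.sq_sqrt (by positivity)
  nlinarith [sq_nonneg (2*w - P - Real.sqrt (P^2+4*Q)), sq_nonneg (2*w - P + Real.sqrt (P^2+4*Q))]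

lemma claimX (s t b1 b2 : ℝ) (hs : 0 < s) (ht : 0 < t) (ht2 : t^2 = 1 + s^2)
    (hb1 : 0 ≤ b1) (hb2 : 0 ≤ b2) (hkey : t * s ≤ b1 + b2 * s) :
    s^4 ≤ (b1^2 + b2^2) * s^2 + 2*b1*b2 + 1 := by
  rcases le_or_gt s 1 with hs1 | hs1
  · have hs2 : s^2 ≤ 1 := by nlinarith
    have hs4 : s^4 ≤ 1 := by nlinarith [sq_nonneg (s^2)]
    have r1 : 0 ≤ (b1^2 + b2^2) * s^2 :=
      mul_nonneg (add_nonneg (sq_nonneg b1) (sq_nonneg b2)) (sq_nonneg s)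
    have r2 : 0 ≤ 2*b1*b2 := by positivity
    linarith
  · rcases le_or_gt t b2 with htb | htb
    · nlinarith [mul_nonneg hb1 hb2, sq_nonneg b1, mul_nonneg (mul_nonneg hb1 hb1) (sq_nonneg s),
        mul_le_mul htb htb ht.le hb2, sq_nonneg s]
    · have hu : (0:ℝ) ≤ t - b2 := by linarith
      have hus : (t - b2) * s ≤ b1 := by nlinarith
      have hus0 : 0 ≤ (t - b2) * s := mul_nonneg hu hs.le
      have hb1sq : ((t - b2)*s)^2 ≤ b1^2 := pow_le_pow_left₀ hus0 hus 2
      have hb1b2 : (t - b2)*s*b2 ≤ b1*b2 := mul_le_mul_of_nonneg_right hus hb2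
      have hident : (((t-b2)^2 * s^2 + b2^2) * s^2 + 2*((t-b2)*s)*b2 + 1 - s^4)
            * ((s^2+s+1)*(s^2+s+2)) =
          s*(s^3-1)*(t*(s^2+s+1) - b2*(s^2+s+2))^2 + (s^2+1)*(s^2+s+1)*(2*s+2) := by
        linear_combination (s^4*((s^2+s+1)*(s^2+s+2)) - s*(s^3-1)*(s^2+s+1)^2) * ht2
      have hpos : (0:ℝ) < (s^2+s+1)*(s^2+s+2) := by nlinarith
      have hcube : (0:ℝ) ≤ s^3 - 1 := by
        nlinarith [mul_nonneg (sub_nonneg.mpr hs1.le) (show (0:ℝ) ≤ s^2+s+1 by positivity)]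
      have h1 : 0 ≤ s*(s^3-1) := mul_nonneg hs.le hcube
      have hrhs : 0 ≤ s*(s^3-1)*(t*(s^2+s+1) - b2*(s^2+s+2))^2
          + (s^2+1)*(s^2+s+1)*(2*s+2) := by
        have := mul_nonneg h1 (sq_nonneg (t*(s^2+s+1) - b2*(s^2+s+2)))
        nlinarith
      have hE0 : 0 ≤ ((t-b2)^2 * s^2 + b2^2) * s^2 + 2*((t-b2)*s)*b2 + 1 - s^4 :=
        (mul_nonneg_iff_of_pos_right hpos).mp (hident ▸ hrhs)
      nlinarith [hE0, hb1sq, hb1b2, mul_le_mul_of_nonneg_right hb1sq (sq_nonneg s)]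

lemma final_scalar (m : ℕ) (r b1 b2 : ℝ) (hr : 0 ≤ r) (hb1 : 0 ≤ b1) (hb2 : 0 ≤ b2)
    (hineq : r^(m+2) * Real.sqrt (1 + r^2) ≤
      b1 * Real.sqrt (∑ i ∈ Finset.range m, (r^2)^i) + b2 * (r^m * Real.sqrt (1 + r^2))) :
    r^4 ≤ 1 + (1/2)*((b1^2+b2^2) + Real.sqrt ((b1^2+b2^2)^2 + 4*(2*b1*b2+1))) := by
  have hQ : (0:ℝ) ≤ 2*b1*b2 + 1 := by positivity
  have hP : (0:ℝ) ≤ b1^2 + b2^2 := by positivity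
  have hD0 : 0 ≤ Real.sqrt ((b1^2+b2^2)^2 + 4*(2*b1*b2+1)) := Real.sqrt_nonneg _
  rcases le_or_gt r 1 with hr1 | hr1
  · have : r^4 ≤ 1 := pow_le_one₀ hr hr1
    nlinarith
  · set t := r^2 with htdef
    have ht1 : 1 < t := by nlinarith
    have ht0 : 0 < t := by linarith
    have hr0 : 0 < r := by linarith
    have hrm : 0 < r^m := pow_pos hr0 m
    have hgeom : (∑ i ∈ Finset.range m, t^i) * (t-1) = t^m - 1 := geom_sum_mul t m
    have hsum_le : (∑ i ∈ Finset.range m, t^i) ≤ t^m / (t-1) := by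
      rw [le_div_iff₀ (by linarith)]
      nlinarith [hgeom, pow_pos ht0 m]
    have htm : t^m = (r^m)^2 := by rw [htdef, ← pow_mul, ← pow_mul, mul_comm]
    have hsqrt_sumle : Real.sqrt (∑ i ∈ Finset.range m, t^i) ≤ r^m / Real.sqrt (t-1) := by
      calc Real.sqrt (∑ i ∈ Finset.range m, t^i) ≤ Real.sqrt (t^m / (t-1)) :=
            Real.sqrt_le_sqrt hsum_le
        _ = r^m / Real.sqrt (t-1) := by
            rw [Real.sqrt_div (by positivity) , htm, Real.sqrt_sq (pow_nonneg hr m)]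
    have hst : 0 < Real.sqrt (t-1) := Real.sqrt_pos.mpr (by linarith)
    have hst2 : 0 < Real.sqrt (1+t) := Real.sqrt_pos.mpr (by linarith)
    have step1 : r^m * (t * Real.sqrt (1+t)) ≤
        b1 * (r^m / Real.sqrt (t-1)) + b2 * (r^m * Real.sqrt (1+t)) := by
      have e1 : r^(m+2) * Real.sqrt (1+t) = r^m * (t * Real.sqrt (1+t)) := by
        rw [pow_add, htdef]; ring
      calc r^m * (t * Real.sqrt (1+t)) = r^(m+2) * Real.sqrt (1+t) := e1.symm
        _ ≤ b1 * Real.sqrt (∑ i ∈ Finset.range m, t^i) + b2 * (r^m * Real.sqrt (1+t)) := hineq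
        _ ≤ b1 * (r^m / Real.sqrt (t-1)) + b2 * (r^m * Real.sqrt (1+t)) := by
            have := mul_le_mul_of_nonneg_left hsqrt_sumle hb1
            linarith
    have step2 : t * Real.sqrt (1+t) ≤ b1 / Real.sqrt (t-1) + b2 * Real.sqrt (1+t) := by
      have h2 : r^m * (t * Real.sqrt (1+t)) ≤
          r^m * (b1 / Real.sqrt (t-1) + b2 * Real.sqrt (1+t)) := by
        calc r^m * (t * Real.sqrt (1+t)) ≤
              b1 * (r^m / Real.sqrt (t-1)) + b2 * (r^m * Real.sqrt (1+t)) := step1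
          _ = r^m * (b1 / Real.sqrt (t-1) + b2 * Real.sqrt (1+t)) := by ring
      exact le_of_mul_le_mul_left h2 hrm
    have step3 : t * (Real.sqrt (t-1) * Real.sqrt (1+t)) ≤
        b1 + b2 * (Real.sqrt (t-1) * Real.sqrt (1+t)) := by
      have h3 := mul_le_mul_of_nonneg_left step2 hst.le
      have hb1' : Real.sqrt (t-1) * (b1 / Real.sqrt (t-1)) = b1 := by
        field_simp
      rw [mul_add, hb1'] at h3
      nlinarith [h3]
    set s := Real.sqrt (t-1) * Real.sqrt (1+t) with hsdef
    have hs2 : s^2 = t^2 - 1 := by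
      rw [hsdef, mul_pow, Real.sq_sqrt (by linarith), Real.sq_sqrt (by linarith)]; ring
    have hspos : 0 < s := mul_pos hst hst2
    have ht2 : t^2 = 1 + s^2 := by rw [hs2]; ring
    have hclaim := claimX s t b1 b2 hspos ht0 ht2 hb1 hb2 (by nlinarith [step3])
    have hroot := root_bound (b1^2+b2^2) (2*b1*b2+1) (s^2) hP hQ (sq_nonneg s)
      (by nlinarith [hclaim])
    have hr4 : r^4 = 1 + s^2 := by rw [← ht2, htdef]; ring
    linarith [hroot, hr4.le]

lemma mulVec_scal (A : Matrix (Fin n) (Fin n) ℍ[ℝ]) (x : Fin n → ℍ[ℝ]) (c : ℍ[ℝ]) (j : Fin n) :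
    A.mulVec (fun l => x l * c) j = (A.mulVec x j) * c := by
  simp [Matrix.mulVec, dotProduct, Finset.sum_mul, mul_assoc]

lemma qVecNorm_scal (x : Fin n → ℍ[ℝ]) (c : ℍ[ℝ]) :
    qVecNorm (fun j => x j * c) = qVecNorm x * ‖c‖ := by
  unfold qVecNorm
  simp only [norm_mul, mul_pow]
  rw [← Finset.sum_mul, Real.sqrt_mul (Finset.sum_nonneg fun _ _ => sq_nonneg _),
    Real.sqrt_sq (norm_nonneg c)]

lemma qVecNorm_triangle (a b c : Fin n → ℍ[ℝ]) (h : ∀ j, c j = a j + b j) :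
    qVecNorm c ≤ qVecNorm a + qVecNorm b := by
  rw [← tq_norm, ← tq_norm, ← tq_norm]
  have hc : tq c = tq a + tq b := by rw [← tq_add_fn]; congr 1; funext j; exact h j
  rw [hc]
  exact norm_add_le _ _

lemma tri2 (A1 B1 A2 B2 A B c1 c2 : ℝ)
    (hA1 : 0 ≤ A1) (hA2 : 0 ≤ A2) (hB1 : 0 ≤ B1) (hB2 : 0 ≤ B2)
    (hc1 : 0 ≤ c1) (hc2 : 0 ≤ c2)
    (hA : A ≤ A1 + A2) (hB : B ≤ B1 + B2) (hA0 : 0 ≤ A) (hB0 : 0 ≤ B)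
    (h1 : A1^2 + B1^2 ≤ c1^2) (h2 : A2^2 + B2^2 ≤ c2^2) :
    A^2 + B^2 ≤ (c1+c2)^2 := by
  have hcross : A1*A2 + B1*B2 ≤ c1*c2 := by
    have hsq : (A1*A2 + B1*B2)^2 ≤ (A1^2+B1^2)*(A2^2+B2^2) := by
      nlinarith [sq_nonneg (A1*B2 - A2*B1)]
    have h12 : (A1^2+B1^2)*(A2^2+B2^2) ≤ c1^2*c2^2 := by
      nlinarith [add_nonneg (sq_nonneg A1) (sq_nonneg B1),
        add_nonneg (sq_nonneg A2) (sq_nonneg B2), sq_nonneg c1, sq_nonneg c2]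
    nlinarith [mul_nonneg hc1 hc2,
      add_nonneg (mul_nonneg hA1 hA2) (mul_nonneg hB1 hB2)]
  have hA' : A^2 ≤ (A1+A2)^2 := pow_le_pow_left₀ hA0 hA 2
  have hB' : B^2 ≤ (B1+B2)^2 := pow_le_pow_left₀ hB0 hB 2
  nlinarith [h1, h2, hcross]

lemma mulVec_sum_vec (M : Matrix (Fin n) (Fin n) ℍ[ℝ]) (s : Finset ℕ)
    (w : ℕ → Fin n → ℍ[ℝ]) (j : Fin n) :
    ∑ i ∈ s, M.mulVec (w i) j = M.mulVec (fun l => ∑ i ∈ s, w i l) j := by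
  simp only [Matrix.mulVec, dotProduct, Finset.mul_sum]
  rw [Finset.sum_comm]

lemma Icc_two {M : Type*} [AddCommMonoid M] (m : ℕ) (f : ℕ → M) :
    (∑ i ∈ Finset.Icc m (m+1), f i) = f m + f (m+1) := by
  rw [Finset.sum_Icc_succ_top (Nat.le_succ m), Finset.Icc_self, Finset.sum_singleton]

lemma qVecNorm_congr (a b : Fin n → ℍ[ℝ]) (h : ∀ j, ‖a j‖ = ‖b j‖) :
    qVecNorm a = qVecNorm b := by
  unfold qVecNorm
  congr 1
  exact Finset.sum_congr rfl fun j _ => by rw [h j]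

end Aux

set_option maxHeartbeats 4000000 in
theorem rightEig_bound_two (k n : ℕ) (hk : 3 ≤ k)
    (A : ℕ → Matrix (Fin n) (Fin n) ℍ[ℝ]) (lam : ℍ[ℝ])
    (hlam : PolyRightEig k n A lam) :
    ‖lam‖ ≤ (1 + (1 / 2) *
      ((Real.sqrt ((1 / 2) * ((∑ i ∈ Finset.range (k - 2), (qSpecNorm (A i) ^ 2 + qSpecNorm (Bseq k n A i) ^ 2)) +
          Real.sqrt ((∑ i ∈ Finset.range (k - 2), (qSpecNorm (A i) ^ 2 - qSpecNorm (Bseq k n A i) ^ 2)) ^ 2 +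
            4 * qSpecNorm (∑ i ∈ Finset.range (k - 2), A i * (Bseq k n A i)ᴴ) ^ 2)))) ^ 2 +
       (Real.sqrt ((1 / 2) * ((∑ i ∈ Finset.Icc (k - 2) (k - 1), (qSpecNorm (A i) ^ 2 + qSpecNorm (Bseq k n A i) ^ 2)) +
          Real.sqrt ((∑ i ∈ Finset.Icc (k - 2) (k - 1), (qSpecNorm (A i) ^ 2 - qSpecNorm (Bseq k n A i) ^ 2)) ^ 2 +
            4 * qSpecNorm (∑ i ∈ Finset.Icc (k - 2) (k - 1), A i * (Bseq k n A i)ᴴ) ^ 2)))) ^ 2 +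
       Real.sqrt (((Real.sqrt ((1 / 2) * ((∑ i ∈ Finset.range (k - 2), (qSpecNorm (A i) ^ 2 + qSpecNorm (Bseq k n A i) ^ 2)) +
            Real.sqrt ((∑ i ∈ Finset.range (k - 2), (qSpecNorm (A i) ^ 2 - qSpecNorm (Bseq k n A i) ^ 2)) ^ 2 +
              4 * qSpecNorm (∑ i ∈ Finset.range (k - 2), A i * (Bseq k n A i)ᴴ) ^ 2)))) ^ 2 +
          (Real.sqrt ((1 / 2) * ((∑ i ∈ Finset.Icc (k - 2) (k - 1), (qSpecNorm (A i) ^ 2 + qSpecNorm (Bseq k n A i) ^ 2)) +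
            Real.sqrt ((∑ i ∈ Finset.Icc (k - 2) (k - 1), (qSpecNorm (A i) ^ 2 - qSpecNorm (Bseq k n A i) ^ 2)) ^ 2 +
              4 * qSpecNorm (∑ i ∈ Finset.Icc (k - 2) (k - 1), A i * (Bseq k n A i)ᴴ) ^ 2)))) ^ 2) ^ 2 +
         4 * (2 * (Real.sqrt ((1 / 2) * ((∑ i ∈ Finset.range (k - 2), (qSpecNorm (A i) ^ 2 + qSpecNorm (Bseq k n A i) ^ 2)) +
            Real.sqrt ((∑ i ∈ Finset.range (k - 2), (qSpecNorm (A i) ^ 2 - qSpecNorm (Bseq k n A i) ^ 2)) ^ 2 +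
              4 * qSpecNorm (∑ i ∈ Finset.range (k - 2), A i * (Bseq k n A i)ᴴ) ^ 2)))) *
            (Real.sqrt ((1 / 2) * ((∑ i ∈ Finset.Icc (k - 2) (k - 1), (qSpecNorm (A i) ^ 2 + qSpecNorm (Bseq k n A i) ^ 2)) +
            Real.sqrt ((∑ i ∈ Finset.Icc (k - 2) (k - 1), (qSpecNorm (A i) ^ 2 - qSpecNorm (Bseq k n A i) ^ 2)) ^ 2 +
              4 * qSpecNorm (∑ i ∈ Finset.Icc (k - 2) (k - 1), A i * (Bseq k n A i)ᴴ) ^ 2)))) + 1))))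
      ^ ((1 : ℝ) / 4) := by
  obtain ⟨x, hx, hLx⟩ := hlam
  obtain ⟨m, rfl⟩ : ∃ m, k = m + 2 := ⟨k - 2, by omega⟩
  have e2 : m + 2 - 2 = m := by omega
  have e1 : m + 2 - 1 = m + 1 := by omega
  rw [e2, e1]
  set r := ‖lam‖ with hrdef
  set N := qVecNorm x with hNdef
  have hN0 : 0 < N := qVecNorm_pos hx
  set y : ℕ → Fin n → ℍ[ℝ] := fun i => fun j => x j * lam ^ i with hy
  -- E1
  have hE1 : ∀ j, (∑ i ∈ Finset.range (m+2), (A i).mulVec (y i) j) = -(x j * lam^(m+2)) := by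
    intro j
    have hconv : ∀ i, (A i).mulVec (y i) j = ((A i).mulVec x j) * lam ^ i := by
      intro i; exact mulVec_scal (A i) x (lam ^ i) j
    rw [Finset.sum_congr rfl (fun i _ => hconv i)]
    exact eq_neg_of_add_eq_zero_left (hLx j)
  -- E2
  have hE2 : ∀ j, (∑ i ∈ Finset.range (m+2), (Bseq (m+2) n A i).mulVec (y i) j)
      = x j * lam^(m+3) := by
    intro j
    have hB : ∀ i, (Bseq (m+2) n A i).mulVec (y i) j
        = (A (m+1)).mulVec ((A i).mulVec (y i)) j
          - (if i = 0 then 0 else (A (i-1)).mulVec (y i) j) := by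
      intro i
      show ((A (m+2-1) * A i - if i = 0 then 0 else A (i-1)).mulVec (y i)) j = _
      rw [e1, Matrix.sub_mulVec, Pi.sub_apply]
      congr 1
      · rw [← Matrix.mulVec_mulVec]
      · split_ifs with h
        · rw [Matrix.zero_mulVec]; rfl
        · rfl
    rw [Finset.sum_congr rfl (fun i _ => hB i), Finset.sum_sub_distrib]
    have hpart1 : (∑ i ∈ Finset.range (m+2), (A (m+1)).mulVec ((A i).mulVec (y i)) j)
        = -((A (m+1)).mulVec (y (m+2)) j) := by
      rw [mulVec_sum_vec]
      have hfe : (fun l => ∑ i ∈ Finset.range (m+2), (A i).mulVec (y i) l)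
          = fun l => -(y (m+2) l) := by funext l; exact hE1 l
      rw [hfe, show (fun l => -(y (m+2) l)) = -(y (m+2)) from rfl, Matrix.mulVec_neg,
        Pi.neg_apply]
    have hTl : ((A (m+1)).mulVec (y (m+1)) j) * lam = (A (m+1)).mulVec (y (m+2)) j := by
      have hy1 : y (m+2) = fun l => y (m+1) l * lam := by
        funext l
        show x l * lam^(m+2) = x l * lam^(m+1) * lam
        rw [pow_succ, mul_assoc]
      rw [hy1]
      exact (mulVec_scal (A (m+1)) (y (m+1)) lam j).symm
    have hpart2 : (∑ i ∈ Finset.range (m+2), if i = 0 then 0 else (A (i-1)).mulVec (y i) j)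
        = -(x j * lam^(m+3)) - (A (m+1)).mulVec (y (m+2)) j := by
      rw [Finset.sum_range_succ']
      have hsh : ∀ i, (if i + 1 = 0 then 0 else (A (i+1-1)).mulVec (y (i+1)) j)
          = ((A i).mulVec (y i) j) * lam := by
        intro i
        rw [if_neg (Nat.succ_ne_zero i), Nat.add_sub_cancel]
        have hy1 : y (i+1) = fun l => y i l * lam := by
          funext l
          show x l * lam^(i+1) = x l * lam^i * lam
          rw [pow_succ, mul_assoc]
        rw [hy1]
        exact mulVec_scal (A i) (y i) lam j
      rw [Finset.sum_congr rfl (fun i _ => hsh i), if_pos rfl, add_zero, ← Finset.sum_mul]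
      have hsum : (∑ i ∈ Finset.range (m+1), (A i).mulVec (y i) j)
          = -(x j * lam^(m+2)) - (A (m+1)).mulVec (y (m+1)) j := by
        have h5 := hE1 j
        rw [Finset.sum_range_succ] at h5
        exact eq_sub_of_add_eq h5
      rw [hsum, sub_mul, hTl, neg_mul, mul_assoc, ← pow_succ]
    rw [hpart1, hpart2]
    abel
  -- block pieces
  set uf1 : Fin n → ℍ[ℝ] := fun j => ∑ i ∈ Finset.range m, (A i).mulVec (y i) j with huf1
  set vf1 : Fin n → ℍ[ℝ] :=
    fun j => ∑ i ∈ Finset.range m, (Bseq (m+2) n A i).mulVec (y i) j with hvf1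
  set uf2 : Fin n → ℍ[ℝ] := fun j => ∑ i ∈ Finset.Icc m (m+1), (A i).mulVec (y i) j with huf2
  set vf2 : Fin n → ℍ[ℝ] :=
    fun j => ∑ i ∈ Finset.Icc m (m+1), (Bseq (m+2) n A i).mulVec (y i) j with hvf2
  have hcore1 := core (Finset.range m) A (Bseq (m+2) n A) y uf1 vf1
    (fun j => rfl) (fun j => rfl)
  have hcore2 := core (Finset.Icc m (m+1)) A (Bseq (m+2) n A) y uf2 vf2
    (fun j => rfl) (fun j => rfl)
  -- splitting
  set w1 : Fin n → ℍ[ℝ] := fun j => -(x j * lam^(m+2)) with hw1def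
  set w2 : Fin n → ℍ[ℝ] := fun j => x j * lam^(m+3) with hw2def
  have hsplitA : ∀ j, w1 j = uf1 j + uf2 j := by
    intro j
    show -(x j * lam^(m+2)) = _
    rw [← hE1 j]
    show (∑ i ∈ Finset.range (m+2), (A i).mulVec (y i) j)
      = (∑ i ∈ Finset.range m, (A i).mulVec (y i) j)
        + ∑ i ∈ Finset.Icc m (m+1), (A i).mulVec (y i) j
    rw [Finset.sum_range_succ, Finset.sum_range_succ, Icc_two]
    abel
  have hsplitB : ∀ j, w2 j = vf1 j + vf2 j := by
    intro j
    show x j * lam^(m+3) = _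
    rw [← hE2 j]
    show (∑ i ∈ Finset.range (m+2), (Bseq (m+2) n A i).mulVec (y i) j)
      = (∑ i ∈ Finset.range m, (Bseq (m+2) n A i).mulVec (y i) j)
        + ∑ i ∈ Finset.Icc m (m+1), (Bseq (m+2) n A i).mulVec (y i) j
    rw [Finset.sum_range_succ, Finset.sum_range_succ, Icc_two]
    abel
  -- norms of y
  have hyn : ∀ i, qVecNorm (y i) = N * r^i := by
    intro i
    show qVecNorm (fun j => x j * lam ^ i) = _
    rw [qVecNorm_scal, norm_pow, ← hNdef, ← hrdef]
  have hr0 : 0 ≤ r := norm_nonneg lam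
  -- μ's and b's
  set μ1 := (1/2) * ((∑ i ∈ Finset.range m,
      (qSpecNorm (A i) ^ 2 + qSpecNorm (Bseq (m+2) n A i) ^ 2)) +
    Real.sqrt ((∑ i ∈ Finset.range m,
        (qSpecNorm (A i) ^ 2 - qSpecNorm (Bseq (m+2) n A i) ^ 2)) ^ 2 +
      4 * qSpecNorm (∑ i ∈ Finset.range m, A i * (Bseq (m+2) n A i)ᴴ) ^ 2)) with hμ1
  set μ2 := (1/2) * ((∑ i ∈ Finset.Icc m (m+1),
      (qSpecNorm (A i) ^ 2 + qSpecNorm (Bseq (m+2) n A i) ^ 2)) +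
    Real.sqrt ((∑ i ∈ Finset.Icc m (m+1),
        (qSpecNorm (A i) ^ 2 - qSpecNorm (Bseq (m+2) n A i) ^ 2)) ^ 2 +
      4 * qSpecNorm (∑ i ∈ Finset.Icc m (m+1), A i * (Bseq (m+2) n A i)ᴴ) ^ 2)) with hμ2
  have hμ1nn : 0 ≤ μ1 := by
    rw [hμ1]
    have h1 : 0 ≤ ∑ i ∈ Finset.range m,
        (qSpecNorm (A i) ^ 2 + qSpecNorm (Bseq (m+2) n A i) ^ 2) :=
      Finset.sum_nonneg fun i _ => add_nonneg (sq_nonneg _) (sq_nonneg _)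
    have h2 := Real.sqrt_nonneg ((∑ i ∈ Finset.range m,
        (qSpecNorm (A i) ^ 2 - qSpecNorm (Bseq (m+2) n A i) ^ 2)) ^ 2 +
      4 * qSpecNorm (∑ i ∈ Finset.range m, A i * (Bseq (m+2) n A i)ᴴ) ^ 2)
    linarith
  have hμ2nn : 0 ≤ μ2 := by
    rw [hμ2]
    have h1 : 0 ≤ ∑ i ∈ Finset.Icc m (m+1),
        (qSpecNorm (A i) ^ 2 + qSpecNorm (Bseq (m+2) n A i) ^ 2) :=
      Finset.sum_nonneg fun i _ => add_nonneg (sq_nonneg _) (sq_nonneg _)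
    have h2 := Real.sqrt_nonneg ((∑ i ∈ Finset.Icc m (m+1),
        (qSpecNorm (A i) ^ 2 - qSpecNorm (Bseq (m+2) n A i) ^ 2)) ^ 2 +
      4 * qSpecNorm (∑ i ∈ Finset.Icc m (m+1), A i * (Bseq (m+2) n A i)ᴴ) ^ 2)
    linarith
  clear_value μ1 μ2
  set b1 := Real.sqrt μ1 with hb1
  set b2 := Real.sqrt μ2 with hb2
  have hb1sq : b1^2 = μ1 := Real.sq_sqrt hμ1nn
  have hb2sq : b2^2 = μ2 := Real.sq_sqrt hμ2nn
  -- sums of squared norms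
  set S1 := ∑ i ∈ Finset.range m, qVecNorm (y i) ^ 2 with hS1def
  set S2 := ∑ i ∈ Finset.Icc m (m+1), qVecNorm (y i) ^ 2 with hS2def
  have hS1nn : 0 ≤ S1 := Finset.sum_nonneg fun i _ => sq_nonneg _
  have hS2nn : 0 ≤ S2 := Finset.sum_nonneg fun i _ => sq_nonneg _
  have hS1eq : S1 = N^2 * (∑ i ∈ Finset.range m, (r^2)^i) := by
    rw [hS1def, Finset.mul_sum]
    refine Finset.sum_congr rfl fun i _ => ?_
    rw [hyn i, mul_pow, ← pow_mul, mul_comm i 2, pow_mul]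
  have hS2eq : S2 = (N * r^m)^2 * (1 + r^2) := by
    rw [hS2def, Icc_two m (fun i => qVecNorm (y i) ^ 2)]
    rw [hyn m, hyn (m+1), pow_succ]
    ring
  -- c's
  set c1 := b1 * Real.sqrt S1 with hc1def
  set c2 := b2 * Real.sqrt S2 with hc2def
  have hc1nn : 0 ≤ c1 := mul_nonneg (Real.sqrt_nonneg _) (Real.sqrt_nonneg _)
  have hc2nn : 0 ≤ c2 := mul_nonneg (Real.sqrt_nonneg _) (Real.sqrt_nonneg _)
  have hcore1' : qVecNorm uf1 ^ 2 + qVecNorm vf1 ^ 2 ≤ c1^2 := by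
    rw [hc1def, mul_pow, hb1sq, Real.sq_sqrt hS1nn]
    exact hcore1
  have hcore2' : qVecNorm uf2 ^ 2 + qVecNorm vf2 ^ 2 ≤ c2^2 := by
    rw [hc2def, mul_pow, hb2sq, Real.sq_sqrt hS2nn]
    exact hcore2
  -- triangle
  have hA := qVecNorm_triangle uf1 uf2 w1 hsplitA
  have hB := qVecNorm_triangle vf1 vf2 w2 hsplitB
  have htri := tri2 (qVecNorm uf1) (qVecNorm vf1) (qVecNorm uf2) (qVecNorm vf2)
    (qVecNorm w1) (qVecNorm w2) c1 c2
    (qVecNorm_nonneg _) (qVecNorm_nonneg _) (qVecNorm_nonneg _) (qVecNorm_nonneg _)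
    hc1nn hc2nn hA hB (qVecNorm_nonneg _) (qVecNorm_nonneg _) hcore1' hcore2'
  -- norms of w1 w2
  have hw1n : qVecNorm w1 = N * r^(m+2) := by
    have := qVecNorm_congr w1 (y (m+2)) (fun j => norm_neg _)
    rw [this, hyn]
  have hw2n : qVecNorm w2 = N * r^(m+3) := by
    have : qVecNorm w2 = qVecNorm (y (m+3)) := rfl
    rw [this, hyn]
  -- key inequality
  have hkey : N * (r^(m+2) * Real.sqrt (1+r^2)) ≤ c1 + c2 := by
    have hss : Real.sqrt (1+r^2) ^ 2 = 1 + r^2 := Real.sq_sqrt (by positivity)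
    have h0 : (N * (r^(m+2) * Real.sqrt (1+r^2)))^2 = (N*r^(m+2))^2 + (N*r^(m+3))^2 := by
      rw [show r^(m+3) = r^(m+2) * r from pow_succ r (m+2)]
      calc (N * (r^(m+2) * Real.sqrt (1+r^2)))^2
          = N^2 * (r^(m+2))^2 * (Real.sqrt (1+r^2))^2 := by ring
        _ = N^2 * (r^(m+2))^2 * (1+r^2) := by rw [hss]
        _ = (N*r^(m+2))^2 + (N*(r^(m+2)*r))^2 := by ring
    have h1 : (N * (r^(m+2) * Real.sqrt (1+r^2)))^2 ≤ (c1+c2)^2 := by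
      rw [h0, ← hw1n, ← hw2n]; exact htri
    exact le_of_pow_le_pow_left₀ two_ne_zero (add_nonneg hc1nn hc2nn) h1
  have hkey2 : r^(m+2) * Real.sqrt (1 + r^2) ≤
      b1 * Real.sqrt (∑ i ∈ Finset.range m, (r^2)^i) + b2 * (r^m * Real.sqrt (1 + r^2)) := by
    have hc1e : c1 = N * (b1 * Real.sqrt (∑ i ∈ Finset.range m, (r^2)^i)) := by
      rw [hc1def, hS1eq, Real.sqrt_mul (sq_nonneg N), Real.sqrt_sq hN0.le]
      ring
    have hc2e : c2 = N * (b2 * (r^m * Real.sqrt (1 + r^2))) := by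
      rw [hc2def, hS2eq, Real.sqrt_mul (sq_nonneg (N * r^m)),
        Real.sqrt_sq (mul_nonneg hN0.le (pow_nonneg hr0 m))]
      ring
    have h6 : N * (r^(m+2) * Real.sqrt (1+r^2)) ≤
        N * (b1 * Real.sqrt (∑ i ∈ Finset.range m, (r^2)^i)
          + b2 * (r^m * Real.sqrt (1 + r^2))) := by
      rw [mul_add, ← hc1e, ← hc2e]; exact hkey
    exact le_of_mul_le_mul_left h6 hN0
  have hr4 := final_scalar m r b1 b2 hr0 (Real.sqrt_nonneg _) (Real.sqrt_nonneg _) hkey2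
  -- rpow finish
  have hX0 : 0 ≤ 1 + (1/2)*((b1^2+b2^2) + Real.sqrt ((b1^2+b2^2)^2 + 4*(2*b1*b2+1))) :=
    le_trans (by positivity : (0:ℝ) ≤ r^4) hr4
  have h4 : ((r^(4:ℕ) : ℝ)) ^ ((1:ℝ)/4) = r := by
    rw [← Real.rpow_natCast r 4, ← Real.rpow_mul hr0]
    norm_num
  calc r = ((r^(4:ℕ) : ℝ)) ^ ((1:ℝ)/4) := h4.symm
    _ ≤ (1 + (1/2)*((b1^2+b2^2) + Real.sqrt ((b1^2+b2^2)^2 + 4*(2*b1*b2+1)))) ^ ((1:ℝ)/4) :=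
        Real.rpow_le_rpow (by positivity) hr4 (by norm_num)
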